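/- arXiv:1801.09298 — 3 statements merged into one kernel-verified Lean document; each statement's English description precedes it below -/
import Mathlib

section
/- Let 𝓔 be a cone-like cluster in ℝ^N (chambers are open cones with vertex 0) with locally finite perimeter, and suppose the density Θ_y(𝓔) exists at every point. If e_N ∈ ∂𝓔 and ε e_N ∈ ∂𝓔 for all ε > 0, and the monotonicity formula holds with Λ = 0 (i.e. r ↦ P(𝓔; B_r(y))/(ω_{N-1}r^{N-1}) is nondecreasing for each y ∈ ∂𝓔), then Θ₀(𝓔) ≥ Θ_{e_N}(𝓔). -/
open MeasureTheory Metric Set Filter Pointwise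

/-- `ℝ^N` as a Euclidean space. -/
abbrev Euc (N : ℕ) := EuclideanSpace ℝ (Fin N)

/-- The divergence of a vector field, as the trace of its Fréchet derivative. -/
noncomputable def divg {N : ℕ} (X : Euc N → Euc N) (x : Euc N) : ℝ :=
  LinearMap.trace ℝ (Euc N) (fderiv ℝ X x).toLinearMap

/-- De Giorgi's relative perimeter of a set `E` in an open set `A`. -/
noncomputable def per {N : ℕ} (E A : Set (Euc N)) : ℝ :=
  sSup {c : ℝ | ∃ X : Euc N → Euc N, ContDiff ℝ 1 X ∧ (∀ x, ‖X x‖ ≤ 1) ∧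
    IsCompact (tsupport X) ∧ tsupport X ⊆ A ∧ c = ∫ x in E, divg X x}

/-- The relative perimeter of a cluster: half the sum of the chamber perimeters. -/
noncomputable def clPer {N m : ℕ} (E : Fin m → Set (Euc N)) (A : Set (Euc N)) : ℝ :=
  (∑ i, per (E i) A) / 2

/-- The volume of the unit ball in `ℝ^N`. -/
noncomputable def unitBallVol (N : ℕ) : ℝ :=
  (volume (ball (0 : Euc N) 1)).toReal


/-- Auxiliary: the defining set of the relative perimeter. -/
def perSet {N : ℕ} (E A : Set (Euc N)) : Set ℝ :=
  {c : ℝ | ∃ X : Euc N → Euc N, ContDiff ℝ 1 X ∧ (∀ x, ‖X x‖ ≤ 1) ∧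
    IsCompact (tsupport X) ∧ tsupport X ⊆ A ∧ c = ∫ x in E, divg X x}

lemma divg_zero {N : ℕ} (x : Euc N) : divg (fun _ => (0:Euc N)) x = 0 := by
  simp [divg, fderiv_const]

lemma zero_mem_perSet {N : ℕ} (E A : Set (Euc N)) : (0:ℝ) ∈ perSet E A := by
  have hts : tsupport (fun _ : Euc N => (0 : Euc N)) = ∅ := by
    simp [tsupport, Function.support]
  refine ⟨fun _ => 0, contDiff_const, fun x => by simp, ?_, ?_, ?_⟩
  · rw [hts]; exact isCompact_empty
  · rw [hts]; exact empty_subset _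
  · simp [divg_zero]

lemma tsupport_smul_aux {N : ℕ} {X : Euc N → Euc N} {t : ℝ} (ht : 0 < t)
    (hK : IsCompact (tsupport X)) :
    tsupport (fun x => X (t⁻¹ • x)) ⊆ t • tsupport X := by
  have hclosed : IsClosed (t • tsupport X) := (hK.smul t).isClosed
  refine closure_minimal ?_ hclosed
  intro x hx
  have hx' : X (t⁻¹ • x) ≠ 0 := hx
  exact ⟨t⁻¹ • x, subset_tsupport X hx', smul_inv_smul₀ ht.ne' x⟩

-- key membership scaling
lemma perSet_scale {N : ℕ} {E A : Set (Euc N)} {t : ℝ} (ht : 0 < t)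
    (hE : t • E = E) {c : ℝ} (hc : c ∈ perSet E A) :
    (t ^ N * t⁻¹) * c ∈ perSet E (t • A) := by
  obtain ⟨X, hX, hX1, hK, hsub, rfl⟩ := hc
  have htne : t ≠ 0 := ht.ne'
  refine ⟨fun x => X (t⁻¹ • x), hX.comp (contDiff_id.const_smul t⁻¹), fun x => hX1 _, ?_, ?_, ?_⟩
  · exact (hK.smul t).of_isClosed_subset (isClosed_tsupport _) (tsupport_smul_aux ht hK)
  · exact (tsupport_smul_aux ht hK).trans (smul_set_mono hsub)
  -- the integral identity
  have hdiff : Differentiable ℝ X := hX.differentiable one_ne_zero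
  have hdivg : ∀ x : Euc N, divg (fun x => X (t⁻¹ • x)) x = t⁻¹ * divg X (t⁻¹ • x) := by
    intro x
    have h1 : HasFDerivAt (fun x : Euc N => X (t⁻¹ • x))
        ((fderiv ℝ X (t⁻¹ • x)).comp (t⁻¹ • ContinuousLinearMap.id ℝ (Euc N))) x := by
      have hinner : HasFDerivAt (fun x : Euc N => t⁻¹ • x)
          (t⁻¹ • ContinuousLinearMap.id ℝ (Euc N)) x := (hasFDerivAt_id x).const_smul t⁻¹
      exact ((hdiff (t⁻¹ • x)).hasFDerivAt).comp x hinner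
    rw [divg, h1.fderiv]
    rw [ContinuousLinearMap.comp_smul, ContinuousLinearMap.comp_id]
    simp [divg]
  have hEinv : t⁻¹ • E = E := by
    conv_lhs => rw [← hE, inv_smul_smul₀ htne]
  have : (∫ x in E, divg (fun x => X (t⁻¹ • x)) x) = (t ^ N * t⁻¹) * ∫ x in E, divg X x := by
    simp only [hdivg]
    rw [integral_const_mul, Measure.setIntegral_comp_smul_of_pos volume (divg X) E (inv_pos.mpr ht),
      hEinv, finrank_euclideanSpace_fin]
    simp [smul_eq_mul, inv_pow, inv_inv]; ring
  exact this.symm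

lemma per_eq_sSup {N : ℕ} (E A : Set (Euc N)) : per E A = sSup (perSet E A) := rfl

lemma perSet_smul_eq {N : ℕ} {E : Set (Euc N)} (A : Set (Euc N)) {t : ℝ} (ht : 0 < t)
    (hE : t • E = E) : perSet E (t • A) = (t ^ N * t⁻¹) • perSet E A := by
  have htne : t ≠ 0 := ht.ne'
  have hEinv : t⁻¹ • E = E := by conv_lhs => rw [← hE, inv_smul_smul₀ htne]
  apply Set.Subset.antisymm
  · intro c hc
    have h := perSet_scale (inv_pos.mpr ht) hEinv hc
    rw [inv_smul_smul₀ htne] at h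
    refine ⟨(t⁻¹ ^ N * t⁻¹⁻¹) * c, h, ?_⟩
    simp only [smul_eq_mul, inv_inv, inv_pow]
    field_simp
  · rintro _ ⟨c, hc, rfl⟩
    simpa [smul_eq_mul] using perSet_scale ht hE hc

lemma per_smul {N : ℕ} {E : Set (Euc N)} (A : Set (Euc N)) {t : ℝ} (ht : 0 < t)
    (hE : t • E = E) : per E (t • A) = (t ^ N * t⁻¹) * per E A := by
  rw [per_eq_sSup, per_eq_sSup, perSet_smul_eq A ht hE,
    Real.sSup_smul_of_nonneg (by positivity), smul_eq_mul]

lemma perSet_mono {N : ℕ} (E : Set (Euc N)) {A A' : Set (Euc N)} (h : A ⊆ A') :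
    perSet E A ⊆ perSet E A' := by
  rintro c ⟨X, h1, h2, h3, h4, h5⟩
  exact ⟨X, h1, h2, h3, h4.trans h, h5⟩

lemma not_bddAbove_smul {k : ℝ} (hk : 0 < k) {S : Set ℝ} (hS : ¬ BddAbove S) :
    ¬ BddAbove (k • S) := by
  intro ⟨b, hb⟩
  refine hS ⟨b / k, fun x hx => ?_⟩
  have : k * x ≤ b := hb ⟨x, hx, rfl⟩
  exact (le_div_iff₀ hk).mpr (by linarith [this])

lemma per_mono {N : ℕ} (E : Set (Euc N)) {A A' : Set (Euc N)} (h : A ⊆ A')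
    (h' : BddAbove (perSet E A') ∨ ¬ BddAbove (perSet E A)) : per E A ≤ per E A' := by
  rcases h' with hb | hub
  · exact csSup_le_csSup hb ⟨0, zero_mem_perSet E A⟩ (perSet_mono E h)
  · have hub' : ¬ BddAbove (perSet E A') := fun hb => hub (hb.mono (perSet_mono E h))
    rw [per_eq_sSup, per_eq_sSup, Real.sSup_of_not_bddAbove hub,
      Real.sSup_of_not_bddAbove hub']


/-- For a cone-like cluster `𝓔` in `ℝ^{n+1}` whose density exists at every point, if
`e_N ∈ ∂𝓔`, `ε e_N ∈ ∂𝓔` for all `ε > 0`, and the density ratio is nondecreasing at each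
boundary point (monotonicity with `Λ = 0`), then `Θ₀(𝓔) ≥ Θ_{e_N}(𝓔)`. -/
theorem density_at_origin_ge_density_at_eN
    (n m : ℕ) (E : Fin m → Set (Euc (n + 1)))
    (hopen : ∀ i, IsOpen (E i))
    (hcone : ∀ i, ∀ t : ℝ, 0 < t → t • E i = E i)
    (hdisj : ∀ i j, i ≠ j → volume (E i ∩ E j) = 0)
    (Θ : Euc (n + 1) → ℝ)
    (hΘ : ∀ y : Euc (n + 1), Tendsto
      (fun r : ℝ => clPer E (ball y r) / (unitBallVol n * r ^ n))
      (nhdsWithin 0 (Ioi 0)) (nhds (Θ y)))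
    (heN : EuclideanSpace.single (Fin.last n) (1 : ℝ) ∈ ⋃ i, frontier (E i))
    (heps : ∀ ε : ℝ, 0 < ε →
      ε • EuclideanSpace.single (Fin.last n) (1 : ℝ) ∈ ⋃ i, frontier (E i))
    (hmono : ∀ y ∈ ⋃ i, frontier (E i), MonotoneOn
      (fun r : ℝ => clPer E (ball y r) / (unitBallVol n * r ^ n)) (Ioi 0)) :
    Θ (EuclideanSpace.single (Fin.last n) (1 : ℝ)) ≤ Θ 0 := by
  set e := EuclideanSpace.single (Fin.last n) (1 : ℝ) with he
  set c := unitBallVol n with hcdef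
  have hc : 0 < c := by
    rw [hcdef, unitBallVol]
    exact ENNReal.toReal_pos (measure_ball_pos volume 0 one_pos).ne' measure_ball_lt_top.ne
  set K := clPer E (ball (0 : Euc (n+1)) 1) with hKdef
  have hnorme : ‖e‖ = 1 := by rw [he, EuclideanSpace.norm_single]; norm_num
  have hball_smul : ∀ (y : Euc (n+1)) (r t : ℝ), 0 < t → t • ball y r = ball (t • y) (t * r) := by
    intro y r t ht
    rw [_root_.smul_ball ht.ne', Real.norm_eq_abs, abs_of_pos ht]
  have hclPer_smul : ∀ (A : Set (Euc (n+1))) {t : ℝ}, 0 < t →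
      clPer E (t • A) = t ^ n * clPer E A := by
    intro A t ht
    have hsum : ∑ i, per (E i) (t • A) = (t ^ (n+1) * t⁻¹) * ∑ i, per (E i) A := by
      rw [Finset.mul_sum]
      exact Finset.sum_congr rfl (fun i _ => per_smul A ht (hcone i t ht))
    have hpow : t ^ (n+1) * t⁻¹ = t ^ n := by
      rw [pow_succ, mul_assoc, mul_inv_cancel₀ ht.ne', mul_one]
    rw [clPer, clPer, hsum, hpow, mul_div_assoc]
  -- Θ 0 = K / c
  have hΘ0 : Θ 0 = K / c := by
    have hfeq : ∀ᶠ r in nhdsWithin (0:ℝ) (Ioi 0),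
        (K / c : ℝ) = clPer E (ball (0 : Euc (n+1)) r) / (c * r ^ n) := by
      filter_upwards [self_mem_nhdsWithin] with r hr
      have hr : (0:ℝ) < r := hr
      have hb : ball (0 : Euc (n+1)) r = r • ball 0 1 := by
        rw [hball_smul _ _ _ hr, smul_zero, mul_one]
      rw [hb, hclPer_smul _ hr, ← hKdef]
      have hrn : (r:ℝ) ^ n ≠ 0 := pow_ne_zero _ hr.ne'
      field_simp
    exact tendsto_nhds_unique (hΘ 0) (Tendsto.congr' hfeq tendsto_const_nhds)
  -- Θ (ε • e) = Θ e
  have hscale : ∀ ε : ℝ, 0 < ε → Θ (ε • e) = Θ e := by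
    intro ε hε
    have hmap : Tendsto (fun r : ℝ => ε * r) (nhdsWithin 0 (Ioi 0)) (nhdsWithin 0 (Ioi 0)) := by
      apply tendsto_nhdsWithin_of_tendsto_nhds_of_eventually_within
      · simpa using ((continuous_mul_left ε).tendsto (0:ℝ)).mono_left
          nhdsWithin_le_nhds
      · filter_upwards [self_mem_nhdsWithin] with r hr
        exact mul_pos hε hr
    have h1 : Tendsto (fun r : ℝ => clPer E (ball (ε • e) (ε * r)) / (c * (ε * r) ^ n))
        (nhdsWithin 0 (Ioi 0)) (nhds (Θ (ε • e))) := (hΘ (ε • e)).comp hmap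
    have h2 : ∀ᶠ r in nhdsWithin (0:ℝ) (Ioi 0),
        clPer E (ball (ε • e) (ε * r)) / (c * (ε * r) ^ n)
          = clPer E (ball e r) / (c * r ^ n) := by
      filter_upwards [self_mem_nhdsWithin] with r hr
      have hr : (0:ℝ) < r := hr
      have hb : ball (ε • e) (ε * r) = ε • ball e r := (hball_smul e r ε hε).symm
      rw [hb, hclPer_smul _ hε, mul_pow]
      have hεn : (ε:ℝ) ^ n ≠ 0 := pow_ne_zero _ hε.ne'
      have hrn : (r:ℝ) ^ n ≠ 0 := pow_ne_zero _ hr.ne'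
      field_simp
    exact tendsto_nhds_unique (h1.congr' h2) (hΘ e)
  -- main estimate
  have hstep : ∀ ε : ℝ, ε ∈ Ioo (0:ℝ) (1/2) → Θ e ≤ K / (c * (1 - ε) ^ n) := by
    rintro ε ⟨hε0, hε2⟩
    have h1ε : (0:ℝ) < 1 - ε := by linarith
    have h2ε : (0:ℝ) < 1 - 2*ε := by linarith
    have hεe : ‖ε • e‖ = ε := by
      rw [norm_smul, hnorme, Real.norm_eq_abs, abs_of_pos hε0, mul_one]
    have hsubset : ball (ε • e) (1 - ε) ⊆ ball (0 : Euc (n+1)) 1 := by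
      intro x hx
      rw [mem_ball] at hx ⊢
      have ht := dist_triangle x (ε • e) 0
      rw [dist_zero_right] at ht ⊢
      rw [dist_zero_right] at *
      have : ‖ε • e‖ = ε := hεe
      calc ‖x‖ ≤ dist x (ε • e) + ‖ε • e‖ := ht
        _ < (1 - ε) + ε := by rw [this]; linarith [hx]
        _ = 1 := by ring
    have hsubset2 : ball (0 : Euc (n+1)) (1 - 2*ε) ⊆ ball (ε • e) (1 - ε) := by
      intro x hx
      rw [mem_ball] at hx ⊢
      rw [dist_zero_right] at hx
      calc dist x (ε • e) ≤ ‖x‖ + ‖ε • e‖ := dist_le_norm_add_norm x (ε • e)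
        _ < (1 - 2*ε) + ε := by rw [hεe]; linarith
        _ ≤ 1 - ε := by linarith
    have hmon := hmono _ (heps ε hε0)
    have hθle : Θ (ε • e) ≤ clPer E (ball (ε • e) (1 - ε)) / (c * (1 - ε) ^ n) := by
      apply le_of_tendsto (hΘ (ε • e))
      filter_upwards [self_mem_nhdsWithin, nhdsWithin_le_nhds (Iio_mem_nhds h1ε)]
        with r hr hr'
      exact hmon hr (mem_Ioi.mpr h1ε) (le_of_lt hr')
    have hperle : ∀ i, per (E i) (ball (ε • e) (1 - ε)) ≤ per (E i) (ball (0 : Euc (n+1)) 1) := by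
      intro i
      by_cases hbdd : BddAbove (perSet (E i) (ball (0 : Euc (n+1)) 1))
      · exact per_mono _ hsubset (Or.inl hbdd)
      · refine per_mono _ hsubset (Or.inr ?_)
        intro hbb
        have hkey : perSet (E i) (ball (0 : Euc (n+1)) (1 - 2*ε))
            = ((1 - 2*ε) ^ (n+1) * (1 - 2*ε)⁻¹) • perSet (E i) (ball 0 1) := by
          have h := perSet_smul_eq (E := E i) (ball (0 : Euc (n+1)) 1) h2ε (hcone i _ h2ε)
          rwa [hball_smul _ _ _ h2ε, smul_zero, mul_one] at h
        have hnb := not_bddAbove_smul (k := (1 - 2*ε) ^ (n+1) * (1 - 2*ε)⁻¹)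
          (by positivity) hbdd
        rw [← hkey] at hnb
        exact hnb (hbb.mono (perSet_mono _ hsubset2))
    have hKle : clPer E (ball (ε • e) (1 - ε)) ≤ K := by
      rw [hKdef, clPer, clPer]
      have h := Finset.sum_le_sum (s := Finset.univ) (fun i _ => hperle i)
      linarith [h]
    calc Θ e = Θ (ε • e) := (hscale ε hε0).symm
      _ ≤ clPer E (ball (ε • e) (1 - ε)) / (c * (1 - ε) ^ n) := hθle
      _ ≤ K / (c * (1 - ε) ^ n) := by
          gcongr
  -- pass to the limit ε → 0⁺
  have hlim : Tendsto (fun ε : ℝ => K / (c * (1 - ε) ^ n)) (nhdsWithin 0 (Ioi 0))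
      (nhds (K / c)) := by
    have hcont : ContinuousAt (fun ε : ℝ => K / (c * (1 - ε) ^ n)) 0 := by
      apply ContinuousAt.div continuousAt_const
      · fun_prop
      · simp [hc.ne']
    have := hcont.tendsto.mono_left (nhdsWithin_le_nhds (s := Ioi (0:ℝ)))
    simpa using this
  have hfinal : Θ e ≤ K / c := by
    apply ge_of_tendsto hlim
    filter_upwards [self_mem_nhdsWithin,
      nhdsWithin_le_nhds (Iio_mem_nhds (by norm_num : (0:ℝ) < 1/2))] with ε h1 h2
    exact hstep ε ⟨h1, h2⟩
  rw [hΘ0]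
  exact hfinal
end

section
/- Let X(x) = φ(|y|) f(t) e_N be a vector field on ℝ^N = ℝ^{N-1} × ℝ with coordinates x = (y,t), where φ, f ∈ C¹(ℝ) are non-negative and non-increasing with φ(s) = f(s) = 1 for s ≤ 0. Let K ⊂ ℝ^N be an open cone with vertex 0, with smooth boundary away from 0 and outer unit normal ν. Then the tangential (boundary) divergence of X on ∂K satisfies div_{∂K} X = φ(|y|) f'(t)(1 − ⟨ν, e_N⟩²) + φ'(|y|) (f(t)/|y|) t ⟨ν, e_N⟩² ≤ 0 at every point of ∂K with t ≥ 0 and y ≠ 0. -/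
open MeasureTheory Metric Set Pointwise RealInnerProductSpace

/-- The canonical projection `ℝ^{n+1} → ℝ^n`, `x = (y,t) ↦ y`. -/
noncomputable def projFst {n : ℕ} (x : Euc (n + 1)) : Euc n :=
  (EuclideanSpace.equiv (Fin n) ℝ).symm fun j => x j.castSucc

/-- The vector field `X(y,t) = φ(|y|) f(t) e_N` on `ℝ^{n+1}`. -/
noncomputable def Xfield {n : ℕ} (φ f : ℝ → ℝ) (x : Euc (n + 1)) : Euc (n + 1) :=
  (φ ‖projFst x‖ * f (x (Fin.last n))) • EuclideanSpace.single (Fin.last n) (1 : ℝ)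

/-- `projFst` as a continuous linear map. -/
noncomputable def projL (n : ℕ) : Euc (n + 1) →L[ℝ] Euc n :=
  ((EuclideanSpace.equiv (Fin n) ℝ).symm.toContinuousLinearMap).comp
    (ContinuousLinearMap.pi fun j : Fin n => EuclideanSpace.proj (j.castSucc))

lemma projL_eq (n : ℕ) (x : Euc (n + 1)) : projL n x = projFst x := rfl

/-- Fréchet derivative of the norm away from the origin. -/
lemma hasFDerivAt_norm_of_ne {E : Type*} [NormedAddCommGroup E] [InnerProductSpace ℝ E]
    {y : E} (hy : y ≠ 0) :
    HasFDerivAt (fun v : E => ‖v‖) (‖y‖⁻¹ • innerSL ℝ y) y := by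
  have h0 : ‖y‖ ≠ 0 := norm_ne_zero_iff.mpr hy
  have h1 : HasFDerivAt (fun v : E => ‖v‖ ^ 2) (2 • innerSL ℝ y) y :=
    (hasStrictFDerivAt_norm_sq y).hasFDerivAt
  have h2 : HasDerivAt Real.sqrt (1 / (2 * Real.sqrt (‖y‖ ^ 2))) (‖y‖ ^ 2) :=
    Real.hasDerivAt_sqrt (by positivity)
  have h3 := h2.comp_hasFDerivAt y h1
  have hfun : (fun v : E => ‖v‖) = fun v : E => Real.sqrt (‖v‖ ^ 2) := by
    funext v; rw [Real.sqrt_sq (norm_nonneg v)]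
  rw [hfun]
  refine h3.congr_fderiv ?_
  ext v
  simp only [ContinuousLinearMap.smul_apply, innerSL_apply_apply, smul_eq_mul,
    Real.sqrt_sq (norm_nonneg y)]
  field_simp
  ring

/-- Antitone differentiable functions have nonpositive derivative. -/
lemma antitone_deriv_nonpos {f : ℝ → ℝ} (hf : Antitone f) {t : ℝ}
    (hd : DifferentiableAt ℝ f t) : deriv f t ≤ 0 := by
  have h := hd.hasDerivAt
  rw [hasDerivAt_iff_tendsto_slope] at h
  have h2 : Filter.Tendsto (slope f t) (nhdsWithin t (Set.Ioi t)) (nhds (deriv f t)) :=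
    h.mono_left (nhdsWithin_mono t fun u hu => ne_of_gt hu)
  refine le_of_tendsto h2 ?_
  filter_upwards [self_mem_nhdsWithin] with u hu
  rw [slope_def_field]
  exact div_nonpos_of_nonpos_of_nonneg (sub_nonpos.2 (hf (le_of_lt hu)))
    (le_of_lt (sub_pos.2 hu))

/-- Trace of a rank-one map `v ↦ G v • e`. -/
lemma trace_smulRight {ι V : Type*} [Fintype ι] [DecidableEq ι] [AddCommGroup V] [Module ℝ V]
    (b : Module.Basis ι ℝ V) (G : V →ₗ[ℝ] ℝ) (e : V) :
    LinearMap.trace ℝ V (G.smulRight e) = G e := by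
  rw [LinearMap.trace_eq_matrix_trace ℝ b, Matrix.trace]
  have h1 : ∀ i, Matrix.diag (LinearMap.toMatrix b b (G.smulRight e)) i
      = G (b i) * b.repr e i := by
    intro i
    simp only [Matrix.diag_apply, LinearMap.toMatrix_apply, LinearMap.smulRight_apply,
      LinearEquiv.map_smul, Finsupp.smul_apply, smul_eq_mul]
  rw [Finset.sum_congr rfl fun i _ => h1 i]
  conv_rhs => rw [← b.sum_repr e]
  rw [map_sum]
  simp [mul_comm]

set_option maxHeartbeats 1000000 in
/-- For `X(y,t) = φ(|y|) f(t) e_N` with `φ, f` nonnegative, nonincreasing, `C¹` and equal to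
`1` on `(-∞,0]`, and `K` an open cone with vertex `0`, at every boundary point `x = (y,t)`
with `t ≥ 0`, `y ≠ 0`, and unit normal `ν` (which satisfies `⟨x,ν⟩ = 0`), the tangential
divergence satisfies
`div_{∂K} X = φ(|y|) f'(t)(1-⟨ν,e_N⟩²) + φ'(|y|)(f(t)/|y|) t ⟨ν,e_N⟩² ≤ 0`. -/
theorem tangential_divergence_nonpos
    (n : ℕ) (φ f : ℝ → ℝ)
    (hφ : ContDiff ℝ 1 φ) (hf : ContDiff ℝ 1 f)
    (hφ0 : ∀ s, 0 ≤ φ s) (hf0 : ∀ s, 0 ≤ f s)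
    (hφmono : Antitone φ) (hfmono : Antitone f)
    (hφ1 : ∀ s ≤ (0 : ℝ), φ s = 1) (hf1 : ∀ s ≤ (0 : ℝ), f s = 1)
    (K : Set (Euc (n + 1))) (hKopen : IsOpen K)
    (hKcone : ∀ t : ℝ, 0 < t → t • K = K)
    (x : Euc (n + 1)) (hx : x ∈ frontier K)
    (ν : Euc (n + 1)) (hν : ‖ν‖ = 1) (hνx : ⟪x, ν⟫ = 0)
    (ht : 0 ≤ x (Fin.last n)) (hy : projFst x ≠ 0) :
    divg (Xfield φ f) x - ⟪(fderiv ℝ (Xfield φ f) x) ν, ν⟫ =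
        φ ‖projFst x‖ * deriv f (x (Fin.last n)) *
          (1 - ⟪ν, EuclideanSpace.single (Fin.last n) (1 : ℝ)⟫ ^ 2) +
        deriv φ ‖projFst x‖ * (f (x (Fin.last n)) / ‖projFst x‖) * x (Fin.last n) *
          ⟪ν, EuclideanSpace.single (Fin.last n) (1 : ℝ)⟫ ^ 2 ∧
      φ ‖projFst x‖ * deriv f (x (Fin.last n)) *
          (1 - ⟪ν, EuclideanSpace.single (Fin.last n) (1 : ℝ)⟫ ^ 2) +
        deriv φ ‖projFst x‖ * (f (x (Fin.last n)) / ‖projFst x‖) * x (Fin.last n) *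
          ⟪ν, EuclideanSpace.single (Fin.last n) (1 : ℝ)⟫ ^ 2 ≤ 0 := by
  set y : Euc n := projFst x with hy_def
  set t : ℝ := x (Fin.last n) with ht_def
  set e : Euc (n + 1) := EuclideanSpace.single (Fin.last n) (1 : ℝ) with he_def
  have hny : ‖y‖ ≠ 0 := norm_ne_zero_iff.mpr hy
  -- derivative of v ↦ ‖projFst v‖
  have hprojF : ∀ v : Euc (n + 1), projFst v = projL n v := fun v => rfl
  have h_norm : HasFDerivAt (fun v : Euc (n + 1) => ‖projFst v‖)
      (‖y‖⁻¹ • ((innerSL ℝ y).comp (projL n))) x := by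
    have h := (hasFDerivAt_norm_of_ne (E := Euc n) hy).comp x ((projL n).hasFDerivAt)
    simpa [Function.comp_def, ContinuousLinearMap.smul_comp, hprojF] using h
  have hφd : HasDerivAt φ (deriv φ ‖y‖) ‖y‖ :=
    ((hφ.differentiable one_ne_zero) ‖y‖).hasDerivAt
  set A : Euc (n + 1) →L[ℝ] ℝ :=
    deriv φ ‖y‖ • (‖y‖⁻¹ • ((innerSL ℝ y).comp (projL n))) with hA_def
  have hA : HasFDerivAt (fun v : Euc (n + 1) => φ ‖projFst v‖) A x :=
    hφd.comp_hasFDerivAt x h_norm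
  -- derivative of v ↦ f (v last)
  have hT : HasFDerivAt (fun v : Euc (n + 1) => v (Fin.last n))
      (EuclideanSpace.proj (Fin.last n) : Euc (n + 1) →L[ℝ] ℝ) x :=
    (EuclideanSpace.proj (Fin.last n) : Euc (n + 1) →L[ℝ] ℝ).hasFDerivAt
  have hfd : HasDerivAt f (deriv f t) t := ((hf.differentiable one_ne_zero) t).hasDerivAt
  set B : Euc (n + 1) →L[ℝ] ℝ :=
    deriv f t • (EuclideanSpace.proj (Fin.last n) : Euc (n + 1) →L[ℝ] ℝ) with hB_def
  have hB : HasFDerivAt (fun v : Euc (n + 1) => f (v (Fin.last n))) B x :=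
    hfd.comp_hasFDerivAt x hT
  -- product
  set G : Euc (n + 1) →L[ℝ] ℝ := φ ‖y‖ • B + f t • A with hG_def
  have hg : HasFDerivAt
      (fun v : Euc (n + 1) => φ ‖projFst v‖ * f (v (Fin.last n))) G x := hA.mul hB
  have hX : HasFDerivAt (Xfield φ f) (G.smulRight e) x := hg.smul_const e
  have hfderiv : fderiv ℝ (Xfield φ f) x = G.smulRight e := hX.fderiv
  -- value of the divergence
  have hGapp : ∀ v : Euc (n + 1), G v =
      φ ‖y‖ * (deriv f t * v (Fin.last n)) +
      f t * (deriv φ ‖y‖ * (‖y‖⁻¹ * ⟪y, projFst v⟫)) := by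
    intro v
    rw [hprojF v]
    simp only [hG_def, hA_def, hB_def, ContinuousLinearMap.add_apply,
      ContinuousLinearMap.smul_apply, ContinuousLinearMap.comp_apply, innerSL_apply_apply,
      smul_eq_mul, PiLp.proj_apply]
  have he_last : e (Fin.last n) = 1 := by simp [he_def]
  have he_proj : projFst e = 0 := by
    apply PiLp.ext
    intro j
    simp [he_def, projFst, EuclideanSpace.single_apply,
      (Fin.castSucc_lt_last j).ne]
  have hdiv : divg (Xfield φ f) x = φ ‖y‖ * deriv f t := by
    rw [divg, hfderiv]
    rw [show ((G.smulRight e).toLinearMap : Euc (n+1) →ₗ[ℝ] Euc (n+1))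
        = (G.toLinearMap).smulRight e from rfl]
    rw [trace_smulRight (EuclideanSpace.basisFun (Fin (n+1)) ℝ).toBasis]
    rw [ContinuousLinearMap.coe_coe, hGapp e, he_last, he_proj]
    simp
  -- ⟨y, projFst ν⟩ = - t * ν last
  have hνe : ⟪ν, e⟫ = ν (Fin.last n) := by
    simp [he_def, EuclideanSpace.inner_single_right]
  have hinner_split : ⟪y, projFst ν⟫ + t * ν (Fin.last n) = 0 := by
    have hx' : ⟪x, ν⟫ = ⟪y, projFst ν⟫ + t * ν (Fin.last n) := by
      rw [hy_def]
      simp only [projFst, PiLp.inner_apply, RCLike.inner_apply, conj_trivial]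
      rw [Fin.sum_univ_castSucc]
      rw [mul_comm t]
      rfl
    rw [← hx', hνx]
  have hyν : ⟪y, projFst ν⟫ = - (t * ν (Fin.last n)) := by linarith
  -- the key identity
  have hident : divg (Xfield φ f) x - ⟪(fderiv ℝ (Xfield φ f) x) ν, ν⟫ =
      φ ‖y‖ * deriv f t * (1 - ⟪ν, e⟫ ^ 2) +
      deriv φ ‖y‖ * (f t / ‖y‖) * t * ⟪ν, e⟫ ^ 2 := by
    rw [hdiv, hfderiv]
    have : ⟪(G.smulRight e) ν, ν⟫ = G ν * ⟪e, ν⟫ := by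
      rw [ContinuousLinearMap.smulRight_apply, real_inner_smul_left]
    have hνe' : ⟪e, ν⟫ = ν (Fin.last n) := by rw [real_inner_comm]; exact hνe
    rw [this, hGapp ν, hyν, hνe, hνe']
    field_simp
    ring
  refine ⟨hident, ?_⟩
  -- nonpositivity
  · have hf' : deriv f t ≤ 0 := antitone_deriv_nonpos hfmono ((hf.differentiable one_ne_zero) t)
    have hφ' : deriv φ ‖y‖ ≤ 0 :=
      antitone_deriv_nonpos hφmono ((hφ.differentiable one_ne_zero) ‖y‖)
    have hsq : ⟪ν, e⟫ ^ 2 ≤ 1 := by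
      have h1 : |⟪ν, e⟫| ≤ ‖ν‖ * ‖e‖ := abs_real_inner_le_norm ν e
      have h2 : ‖e‖ = 1 := by simp [he_def, EuclideanSpace.norm_single]
      rw [hν, h2, mul_one] at h1
      calc ⟪ν, e⟫ ^ 2 = |⟪ν, e⟫| ^ 2 := (sq_abs _).symm
        _ ≤ 1 ^ 2 := pow_le_pow_left₀ (abs_nonneg _) h1 2
        _ = 1 := one_pow 2
    have h2 : (0:ℝ) ≤ ⟪ν, e⟫ ^ 2 := sq_nonneg _
    have hterm1 : φ ‖y‖ * deriv f t * (1 - ⟪ν, e⟫ ^ 2) ≤ 0 :=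
      mul_nonpos_of_nonpos_of_nonneg
        (mul_nonpos_of_nonneg_of_nonpos (hφ0 _) hf') (by linarith)
    have hterm2 : deriv φ ‖y‖ * (f t / ‖y‖) * t * ⟪ν, e⟫ ^ 2 ≤ 0 := by
      have hfn : 0 ≤ f t / ‖y‖ := div_nonneg (hf0 t) (norm_nonneg y)
      have : deriv φ ‖y‖ * (f t / ‖y‖) ≤ 0 := mul_nonpos_of_nonpos_of_nonneg hφ' hfn
      have h3 : deriv φ ‖y‖ * (f t / ‖y‖) * t ≤ 0 := mul_nonpos_of_nonpos_of_nonneg this ht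
      exact mul_nonpos_of_nonpos_of_nonneg h3 h2
    linarith
end

section
/- Let L be the set of points y where a cone-like minimizing cluster 𝓔 in ℝ^N attains its maximal density: L = { y : Θ_y(𝓔) = Θ₀(𝓔) }. Assume the following two properties (standard consequences of the monotonicity formula): (i) Θ_y(𝓔) ≤ Θ₀(𝓔) for all y, and (ii) if Θ_y(𝓔) = Θ₀(𝓔) then 𝓔 is invariant under translation by y (𝓔(i) + y = 𝓔(i) for all i). Then L is a linear subspace of ℝ^N and 𝓔 = 𝓔' × L for a cone-like cluster 𝓔' in the orthogonal complement of L. -/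
open MeasureTheory Metric Set Filter Pointwise

lemma img_eq_preimg {N : ℕ} (y : Euc N) (s : Set (Euc N)) :
    (fun x => x + y) '' s = (fun x => x - y) ⁻¹' s := by
  ext z
  constructor
  · rintro ⟨w, hw, rfl⟩; simpa [add_sub_cancel_right] using hw
  · intro hz; exact ⟨z - y, hz, by simp⟩

lemma perSet_mem {N : ℕ} (E A : Set (Euc N)) (y : Euc N) (c : ℝ)
    (hc : c ∈ {c : ℝ | ∃ X : Euc N → Euc N, ContDiff ℝ 1 X ∧ (∀ x, ‖X x‖ ≤ 1) ∧
      IsCompact (tsupport X) ∧ tsupport X ⊆ A ∧ c = ∫ x in E, divg X x}) :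
    c ∈ {c : ℝ | ∃ X : Euc N → Euc N, ContDiff ℝ 1 X ∧ (∀ x, ‖X x‖ ≤ 1) ∧
      IsCompact (tsupport X) ∧ tsupport X ⊆ (fun x => x + y) '' A ∧
      c = ∫ x in (fun x => x + y) '' E, divg X x} := by
  obtain ⟨X, hX1, hX2, hX3, hX4, hX5⟩ := hc
  have hsupp : tsupport (fun x => X (x - y)) = (fun x => x + y) '' tsupport X := by
    have h1 : Function.support (fun x => X (x - y)) = (fun x => x + y) '' Function.support X := by
      rw [img_eq_preimg]; rfl
    rw [tsupport, h1]; exact ((Homeomorph.addRight y).image_closure _).symm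
  have hXd := hX1.differentiable one_ne_zero
  have hdiv : ∀ x, divg (fun x => X (x - y)) x = divg X (x - y) := by
    intro x
    have h1 : HasFDerivAt (fun x : Euc N => x - y) (ContinuousLinearMap.id ℝ (Euc N)) x :=
      (hasFDerivAt_id x).sub_const y
    have h2 := ((hXd (x - y)).hasFDerivAt.comp x h1)
    simp only [Function.comp_def] at h2
    rw [divg, h2.fderiv, ContinuousLinearMap.comp_id, divg]
  refine ⟨fun x => X (x - y), hX1.comp (contDiff_id.sub contDiff_const), fun x => hX2 _,
    ?_, ?_, ?_⟩
  · rw [hsupp]; exact hX3.image (continuous_id.add continuous_const)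
  · rw [hsupp]; exact Set.image_mono hX4
  · rw [hX5, img_eq_preimg]
    have hfe : (fun x => divg (fun x' => X (x' - y)) x) = fun x => divg X (x - y) :=
      funext hdiv
    rw [hfe]
    exact ((measurePreserving_sub_right volume y).setIntegral_preimage_emb
        (MeasurableEquiv.subRight y).measurableEmbedding (divg X) E).symm

lemma img_img_neg {N : ℕ} (y : Euc N) (s : Set (Euc N)) :
    (fun x => x + (-y)) '' ((fun x => x + y) '' s) = s := by
  rw [Set.image_image]; simp

lemma per_translate {N : ℕ} (E A : Set (Euc N)) (y : Euc N) :
    per ((fun x => x + y) '' E) ((fun x => x + y) '' A) = per E A := by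
  unfold per
  congr 1
  apply Set.Subset.antisymm
  · intro c hc
    have := perSet_mem _ _ (-y) c hc
    rwa [img_img_neg, img_img_neg] at this
  · exact fun c hc => perSet_mem E A y c hc

lemma ball_translate {N : ℕ} (y x : Euc N) (r : ℝ) :
    (fun z => z + y) '' ball x r = ball (x + y) r := by
  rw [img_eq_preimg]
  ext z
  simp only [Set.mem_preimage, mem_ball, Set.mem_setOf_eq]
  constructor <;> intro h <;> [skip; skip] <;>
    · rw [dist_eq_norm] at *
      convert h using 2
      abel

lemma theta_translate {N m : ℕ} (E : Fin m → Set (Euc N)) (Θ : Euc N → ℝ)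
    (hΘ : ∀ y : Euc N, Tendsto
      (fun r : ℝ => clPer E (ball y r) / (unitBallVol (N - 1) * r ^ (N - 1)))
      (nhdsWithin 0 (Ioi 0)) (nhds (Θ y)))
    (y : Euc N) (hy : ∀ i, (fun x => x + y) '' E i = E i) (x : Euc N) :
    Θ (x + y) = Θ x := by
  have key : ∀ r : ℝ, clPer E (ball (x + y) r) = clPer E (ball x r) := by
    intro r
    unfold clPer
    congr 1
    apply Finset.sum_congr rfl
    intro i _
    conv_lhs => rw [← ball_translate y x r, ← hy i]
    exact per_translate _ _ y
  have h1 := hΘ (x + y)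
  have h2 := hΘ x
  simp only [key] at h1
  exact tendsto_nhds_unique h1 h2

lemma smul_image_translate {N : ℕ} (c : ℝ) (y : Euc N) (s : Set (Euc N)) :
    (fun x => x + c • y) '' (c • s) = c • ((fun x => x + y) '' s) := by
  ext z
  simp only [Set.mem_image, Set.mem_smul_set]
  constructor
  · rintro ⟨w, ⟨u, hu, rfl⟩, rfl⟩
    exact ⟨u + y, ⟨u, hu, rfl⟩, by rw [smul_add]⟩
  · rintro ⟨w, ⟨u, hu, rfl⟩, rfl⟩
    exact ⟨c • u, ⟨u, hu, rfl⟩, by rw [smul_add]⟩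

lemma smul_submodule_set {N : ℕ} (K : Submodule ℝ (Euc N)) {t : ℝ} (ht : t ≠ 0) :
    t • (K : Set (Euc N)) = (K : Set (Euc N)) := by
  ext z
  simp only [Set.mem_smul_set, SetLike.mem_coe]
  constructor
  · rintro ⟨w, hw, rfl⟩; exact K.smul_mem t hw
  · intro hz; exact ⟨t⁻¹ • z, K.smul_mem _ hz, smul_inv_smul₀ ht z⟩

/-- The set `L = {y : Θ_y(𝓔) = Θ₀(𝓔)}` of maximal-density points of a cone-like minimizing
cluster is a linear subspace, and `𝓔 = 𝓔' × L` for a cone-like cluster `𝓔'` in the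
orthogonal complement of `L`. -/
theorem maximal_density_points_form_subspace_and_split
    (N m : ℕ) (E : Fin m → Set (Euc N))
    (hopen : ∀ i, IsOpen (E i))
    (hcone : ∀ i, ∀ t : ℝ, 0 < t → t • E i = E i)
    (hdisj : ∀ i j, i ≠ j → volume (E i ∩ E j) = 0)
    (Θ : Euc N → ℝ)
    (hΘ : ∀ y : Euc N, Tendsto
      (fun r : ℝ => clPer E (ball y r) / (unitBallVol (N - 1) * r ^ (N - 1)))
      (nhdsWithin 0 (Ioi 0)) (nhds (Θ y)))
    (hmax : ∀ y : Euc N, Θ y ≤ Θ 0)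
    (hinv : ∀ y : Euc N, Θ y = Θ 0 → ∀ i, (fun x => x + y) '' E i = E i) :
    ∃ S : Submodule ℝ (Euc N),
      (S : Set (Euc N)) = {y : Euc N | Θ y = Θ 0} ∧
      (∀ i, E i = (E i ∩ (Sᗮ : Set (Euc N))) + (S : Set (Euc N))) ∧
      (∀ i, ∀ t : ℝ, 0 < t →
        t • (E i ∩ (Sᗮ : Set (Euc N))) = E i ∩ (Sᗮ : Set (Euc N))) := by
  set V : Set (Euc N) := {y | ∀ i, (fun x => x + y) '' E i = E i} with hV
  have hneg : ∀ y ∈ V, -y ∈ V := by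
    intro y hy i
    conv_lhs => rw [← hy i]
    exact img_img_neg y (E i)
  have hpos : ∀ (c : ℝ), 0 < c → ∀ y ∈ V, c • y ∈ V := by
    intro c hc y hy i
    calc (fun x => x + c • y) '' E i
        = (fun x => x + c • y) '' (c • E i) := by rw [hcone i c hc]
      _ = c • ((fun x => x + y) '' E i) := smul_image_translate c y (E i)
      _ = c • E i := by rw [hy i]
      _ = E i := hcone i c hc
  have hzero : (0 : Euc N) ∈ V := by
    intro i; simp
  let S : Submodule ℝ (Euc N) :=
    { carrier := V
      zero_mem' := hzero
      add_mem' := by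
        intro a b ha hb i
        have : (fun x => x + (a + b)) '' E i = (fun x => x + b) '' ((fun x => x + a) '' E i) := by
          rw [Set.image_image]
          simp only [add_assoc]
        rw [this, ha i, hb i]
      smul_mem' := by
        intro c y hy
        rcases lt_trichotomy c 0 with h | h | h
        · have : c • y = (-c) • (-y) := by simp
          rw [this]
          exact hpos (-c) (by linarith) (-y) (hneg y hy)
        · simpa [h] using hzero
        · exact hpos c h y hy }
  have hScoe : (S : Set (Euc N)) = V := rfl
  have hSL : (S : Set (Euc N)) = {y : Euc N | Θ y = Θ 0} := by
    rw [hScoe]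
    ext y
    constructor
    · intro hy
      have := theta_translate E Θ hΘ y hy 0
      simpa using this
    · intro hy
      exact hinv y hy
  refine ⟨S, hSL, ?_, ?_⟩
  · intro i
    apply Set.Subset.antisymm
    · intro x hx
      obtain ⟨q, hqS, p, hpO, hx'⟩ := S.exists_add_mem_mem_orthogonal x
      have hnq : -q ∈ V := hneg q hqS
      have hpE : p ∈ E i := by
        have : x + (-q) ∈ (fun z => z + (-q)) '' E i := ⟨x, hx, rfl⟩
        rw [hnq i] at this
        have hpx : p = x + (-q) := by rw [hx']; abel
        rwa [hpx]
      rw [hx']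
      exact Set.mem_add.mpr ⟨p, ⟨hpE, hpO⟩, q, hqS, add_comm p q⟩
    · rintro z hz
      obtain ⟨p, hp, q, hq, rfl⟩ := Set.mem_add.mp hz
      have hqV : q ∈ V := hq
      rw [← hqV i]
      exact ⟨p, hp.1, rfl⟩
  · intro i t ht
    rw [Set.smul_set_inter₀ (ne_of_gt ht), hcone i t ht,
      smul_submodule_set Sᗮ (ne_of_gt ht)]
end
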